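/- For all positive integers N, M and all s,p ∈ {1,…,N}: (i) D_{s,p}(1) ≤ (M+1)²·N; (ii) for every integer k with 2 ≤ k ≤ M/2 + 1, D_{s,p}(k) ≤ (M+1)²·M²; and (iii) for every integer k with k > M/2 + 1, D_{s,p}(k) = 0. -/

import Mathlib

open Finset

/-- The arithmetic progression `A(s,p) = {s + i·p : 0 ≤ i ≤ M}` as a set of integers. -/
def AP (M : ℕ) (s p : ℤ) : Finset ℤ :=
  (Finset.range (M + 1)).image fun i : ℕ => s + (i : ℤ) * p

/-- `D_{s,p}(k)`: the number of pairs `(t,q)`, `t,q ∈ {1,…,N}`, `q ≠ p`,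
with `|A(s,p) ∩ A(t,q)| = k`. -/
noncomputable def D (N M : ℕ) (s p : ℤ) (k : ℕ) : ℕ :=
  ((Finset.Icc (1 : ℤ) N ×ˢ Finset.Icc (1 : ℤ) N).filter
    (fun tq => tq.2 ≠ p ∧ (AP M s p ∩ AP M tq.1 tq.2).card = k)).card

lemma mem_AP {M : ℕ} {s p x : ℤ} : x ∈ AP M s p ↔ ∃ i : ℕ, i ≤ M ∧ x = s + (i:ℤ) * p := by
  simp [AP, Nat.lt_succ_iff, eq_comm]

lemma span_AP {M : ℕ} {s p a b : ℤ} (hp : 0 ≤ p) (ha : a ∈ AP M s p) (hb : b ∈ AP M s p) :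
    b - a ≤ (M:ℤ) * p := by
  obtain ⟨i, hi, rfl⟩ := mem_AP.mp ha
  obtain ⟨j, hj, rfl⟩ := mem_AP.mp hb
  have : (j:ℤ) - i ≤ (M:ℤ) := by
    have : (j:ℤ) ≤ M := by exact_mod_cast hj
    have : (0:ℤ) ≤ i := by positivity
    omega
  nlinarith

lemma dvd_sub_AP {M : ℕ} {s p a b : ℤ} (ha : a ∈ AP M s p) (hb : b ∈ AP M s p) :
    p ∣ b - a := by
  obtain ⟨i, hi, rfl⟩ := mem_AP.mp ha
  obtain ⟨j, hj, rfl⟩ := mem_AP.mp hb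
  exact ⟨(j:ℤ) - i, by ring⟩

lemma lcm_ge {p q : ℤ} (hp : 1 ≤ p) (hq : 1 ≤ q) (hne : q ≠ p) :
    2 * p ≤ (Int.lcm p q : ℤ) ∨ 2 * q ≤ (Int.lcm p q : ℤ) := by
  have hL0 : (0:ℤ) < (Int.lcm p q : ℤ) := by
    have h := Nat.lcm_pos (Int.natAbs_pos.mpr (by omega : p ≠ 0)) (Int.natAbs_pos.mpr (by omega : q ≠ 0))
    exact_mod_cast h
  have hpL : p ∣ (Int.lcm p q : ℤ) := Int.dvd_lcm_left p q
  have hqL : q ∣ (Int.lcm p q : ℤ) := Int.dvd_lcm_right p q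
  have hpLe : p ≤ (Int.lcm p q : ℤ) := Int.le_of_dvd hL0 hpL
  have hqLe : q ≤ (Int.lcm p q : ℤ) := Int.le_of_dvd hL0 hqL
  rcases lt_or_gt_of_ne hne with h | h
  · -- q < p, lcm multiple of q, lcm ≥ p > q
    right
    obtain ⟨m, hm⟩ := hqL
    have hm1 : 1 < m := by nlinarith
    nlinarith
  · left
    obtain ⟨m, hm⟩ := hpL
    have hm1 : 1 < m := by nlinarith
    nlinarith

lemma key_card {M : ℕ} {s p t q : ℤ} (hp : 1 ≤ p) (hq : 1 ≤ q) (hne : q ≠ p) :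
    2 * (AP M s p ∩ AP M t q).card ≤ M + 2 := by
  set K := AP M s p ∩ AP M t q with hK
  by_cases hsmall : K.card ≤ 1
  · omega
  have hne' : K.Nonempty := by
    rw [← Finset.card_pos]; omega
  set a := K.min' hne' with ha
  set b := K.max' hne' with hb
  have haK : a ∈ K := K.min'_mem hne'
  have hbK : b ∈ K := K.max'_mem hne'
  set L : ℤ := (Int.lcm p q : ℤ) with hLdef
  have hL0 : (0:ℤ) < L := by
    have h := Nat.lcm_pos (Int.natAbs_pos.mpr (by omega : p ≠ 0)) (Int.natAbs_pos.mpr (by omega : q ≠ 0))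
    rw [hLdef]; exact_mod_cast h
  have hdvd : ∀ x ∈ K, L ∣ x - a := by
    intro x hx
    have h1 : p ∣ x - a := dvd_sub_AP (Finset.mem_inter.mp haK).1 (Finset.mem_inter.mp hx).1
    have h2 : q ∣ x - a := dvd_sub_AP (Finset.mem_inter.mp haK).2 (Finset.mem_inter.mp hx).2
    exact Int.coe_lcm_dvd_iff.mpr ⟨h1, h2⟩
  set c : ℤ := (b - a) / L with hc
  have hcL : c * L = b - a := Int.ediv_mul_cancel (hdvd b hbK)
  -- card bound
  have hcard : K.card ≤ (Finset.Icc (0:ℤ) c).card := by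
    apply Finset.card_le_card_of_injOn (fun x => (x - a) / L)
    · intro x hx
      rw [Finset.mem_coe, Finset.mem_Icc]
      constructor
      · apply Int.ediv_nonneg _ hL0.le
        have := K.min'_le x hx
        omega
      · apply Int.ediv_le_ediv hL0
        have := K.le_max' x hx
        omega
    · intro x hx y hy hxy
      have hx' : (x - a) / L * L = x - a := Int.ediv_mul_cancel (hdvd x hx)
      have hy' : (y - a) / L * L = y - a := Int.ediv_mul_cancel (hdvd y hy)
      simp only at hxy
      have : x - a = y - a := by rw [← hx', ← hy', hxy]
      omega
  have hc0 : 0 ≤ c := by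
    have hba : a ≤ b := K.min'_le b hbK
    rw [hc]; exact Int.ediv_nonneg (by omega) hL0.le
  have hIcc : (Finset.Icc (0:ℤ) c).card = c.toNat + 1 := by
    rw [Int.card_Icc]; omega
  -- 2c ≤ M
  have h2c : 2 * c ≤ (M:ℤ) := by
    rcases lcm_ge hp hq hne with h | h
    · have hspan : b - a ≤ (M:ℤ) * p :=
        span_AP (by omega) (Finset.mem_inter.mp haK).1 (Finset.mem_inter.mp hbK).1
      nlinarith
    · have hspan : b - a ≤ (M:ℤ) * q :=
        span_AP (by omega) (Finset.mem_inter.mp haK).2 (Finset.mem_inter.mp hbK).2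
      nlinarith
  have : K.card ≤ c.toNat + 1 := by omega
  omega

theorem D_bounds (N M : ℕ) (hN : 0 < N) (hM : 0 < M)
    (s p : ℤ) (hs : s ∈ Finset.Icc (1 : ℤ) N) (hp : p ∈ Finset.Icc (1 : ℤ) N) :
    D N M s p 1 ≤ (M + 1) ^ 2 * N ∧
    (∀ k : ℕ, 2 ≤ k → (k : ℝ) ≤ (M : ℝ) / 2 + 1 → D N M s p k ≤ (M + 1) ^ 2 * M ^ 2) ∧
    (∀ k : ℕ, (M : ℝ) / 2 + 1 < (k : ℝ) → D N M s p k = 0) := by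
  have hp1 : 1 ≤ p := (Finset.mem_Icc.mp hp).1
  refine ⟨?_, ?_, ?_⟩
  · -- part (i)
    unfold D
    have hsub : ((Finset.Icc (1 : ℤ) N ×ˢ Finset.Icc (1 : ℤ) N).filter
        (fun tq => tq.2 ≠ p ∧ (AP M s p ∩ AP M tq.1 tq.2).card = 1)) ⊆
        (Finset.range (M+1) ×ˢ Finset.range (M+1) ×ˢ Finset.Icc (1:ℤ) N).image
          (fun w : ℕ × ℕ × ℤ => (s + (w.1:ℤ)*p - (w.2.1:ℤ)*w.2.2, w.2.2)) := by
      intro tq htq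
      rw [Finset.mem_filter, Finset.mem_product] at htq
      obtain ⟨⟨ht, hq⟩, hqp, hcard⟩ := htq
      have hne : (AP M s p ∩ AP M tq.1 tq.2).Nonempty := by
        rw [← Finset.card_pos]; omega
      obtain ⟨x, hx⟩ := hne
      rw [Finset.mem_inter] at hx
      obtain ⟨i, hi, hxi⟩ := mem_AP.mp hx.1
      obtain ⟨j, hj, hxj⟩ := mem_AP.mp hx.2
      refine Finset.mem_image.mpr ⟨(i, j, tq.2), ?_, ?_⟩
      · simp only [Finset.mem_product, Finset.mem_range]
        exact ⟨by omega, by omega, hq⟩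
      · have : tq.1 = s + (i:ℤ)*p - (j:ℤ)*tq.2 := by
          have := hxi; have := hxj; omega
        exact Prod.ext (by simp [this.symm]) rfl
    calc ((Finset.Icc (1 : ℤ) N ×ˢ Finset.Icc (1 : ℤ) N).filter
        (fun tq => tq.2 ≠ p ∧ (AP M s p ∩ AP M tq.1 tq.2).card = 1)).card
        ≤ _ := Finset.card_le_card hsub
      _ ≤ (Finset.range (M+1) ×ˢ Finset.range (M+1) ×ˢ Finset.Icc (1:ℤ) N).card :=
          Finset.card_image_le
      _ = (M+1) * ((M+1) * N) := by
          simp [Finset.card_product]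
      _ = (M+1)^2 * N := by ring
  · -- part (ii)
    intro k hk2 _
    unfold D
    have hsub : ((Finset.Icc (1 : ℤ) N ×ˢ Finset.Icc (1 : ℤ) N).filter
        (fun tq => tq.2 ≠ p ∧ (AP M s p ∩ AP M tq.1 tq.2).card = k)) ⊆
        ((Finset.range (M+1)).offDiag ×ˢ (Finset.range (M+1)).offDiag).image
          (fun w : (ℕ × ℕ) × (ℕ × ℕ) =>
            (s + (w.1.1:ℤ)*p - (w.2.1:ℤ)*((((w.1.2:ℤ)-(w.1.1:ℤ))*p)/((w.2.2:ℤ)-(w.2.1:ℤ))),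
             (((w.1.2:ℤ)-(w.1.1:ℤ))*p)/((w.2.2:ℤ)-(w.2.1:ℤ)))) := by
      intro tq htq
      rw [Finset.mem_filter, Finset.mem_product] at htq
      obtain ⟨⟨ht, hq⟩, hqp, hcard⟩ := htq
      have hq1 : 1 ≤ tq.2 := (Finset.mem_Icc.mp hq).1
      have h2 : 1 < (AP M s p ∩ AP M tq.1 tq.2).card := by omega
      obtain ⟨x, hx, y, hy, hxy⟩ := Finset.one_lt_card.mp h2
      rw [Finset.mem_inter] at hx hy
      obtain ⟨i1, hi1, hxi⟩ := mem_AP.mp hx.1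
      obtain ⟨j1, hj1, hxj⟩ := mem_AP.mp hx.2
      obtain ⟨i2, hi2, hyi⟩ := mem_AP.mp hy.1
      obtain ⟨j2, hj2, hyj⟩ := mem_AP.mp hy.2
      have hii : i1 ≠ i2 := by
        rintro rfl; exact hxy (by omega)
      have hjj : j1 ≠ j2 := by
        rintro rfl; exact hxy (by omega)
      have hjne : (j2:ℤ) - (j1:ℤ) ≠ 0 := by
        intro h; exact hjj (by omega)
      have heq : ((i2:ℤ) - i1) * p = ((j2:ℤ) - j1) * tq.2 := by
        have := hxi; have := hxj; have := hyi; have := hyj; nlinarith [hxi, hxj, hyi, hyj]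
      have hqdiv : (((i2:ℤ) - i1) * p) / ((j2:ℤ) - j1) = tq.2 := by
        rw [heq, Int.mul_ediv_cancel_left _ hjne]
      refine Finset.mem_image.mpr ⟨((i1, i2), (j1, j2)), ?_, ?_⟩
      · simp only [Finset.mem_product, Finset.mem_offDiag, Finset.mem_range]
        exact ⟨⟨by omega, by omega, hii⟩, ⟨by omega, by omega, hjj⟩⟩
      · have htval : tq.1 = s + (i1:ℤ)*p - (j1:ℤ)*tq.2 := by omega
        refine Prod.ext ?_ ?_
        · simp only
          rw [hqdiv, ← htval]
        · simp only
          rw [hqdiv]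
    calc ((Finset.Icc (1 : ℤ) N ×ˢ Finset.Icc (1 : ℤ) N).filter
        (fun tq => tq.2 ≠ p ∧ (AP M s p ∩ AP M tq.1 tq.2).card = k)).card
        ≤ _ := Finset.card_le_card hsub
      _ ≤ ((Finset.range (M+1)).offDiag ×ˢ (Finset.range (M+1)).offDiag).card :=
          Finset.card_image_le
      _ = ((M+1)*(M+1) - (M+1)) * ((M+1)*(M+1) - (M+1)) := by
          simp [Finset.card_product, Finset.offDiag_card]
      _ = ((M+1)*M) * ((M+1)*M) := by
          have h : (M+1)*(M+1) - (M+1) = (M+1)*M := by rw [Nat.mul_succ]; omega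
          rw [h]
      _ = (M+1)^2 * M^2 := by ring
  · -- part (iii)
    intro k hk
    unfold D
    rw [Finset.card_eq_zero, Finset.filter_eq_empty_iff]
    rintro tq htq ⟨hqp, hcard⟩
    rw [Finset.mem_product] at htq
    have hq1 : 1 ≤ tq.2 := (Finset.mem_Icc.mp htq.2).1
    have hkey := key_card (M := M) (s := s) (t := tq.1) hp1 hq1 hqp
    rw [hcard] at hkey
    have : (M:ℝ) + 2 < 2 * k := by linarith
    have : M + 2 < 2 * k := by exact_mod_cast this
    omega
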